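/- Let (X, ‖·‖) be a normed space. For r ∈ [0, 1) and s > 0 let Γ(r, s) be the family of all mappings T : X → X such that for all x, y ∈ X: s‖x − Tx‖ ≤ ‖x − y‖ implies ‖Tx − Ty‖ ≤ r‖x − y‖. Then the following are equivalent: (i) X is a Banach space (i.e., X is complete); (ii) for every r ∈ [0, 1), every mapping T ∈ Γ(r, f(r)) has a fixed point; (iii) there exist r ∈ (0, 1) and s ∈ (0, f(r)] such that every mapping T ∈ Γ(r, s) has a fixed point. -/

import Mathlib

/-- The function f from Suzuki's theorem: f(r) = 1 on [0, (√5−1)/2],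
    (1−r)/r² on ((√5−1)/2, 1/√2), and 1/(1+r) on [1/√2, 1). -/
noncomputable def suzukiF (r : ℝ) : ℝ :=
  if r ≤ (Real.sqrt 5 - 1) / 2 then 1
  else if r < 1 / Real.sqrt 2 then (1 - r) / r ^ 2
  else 1 / (1 + r)

/-- The family Γ(r, s) of mappings `T` on `X` such that
    `s‖x − Tx‖ ≤ ‖x − y‖` implies `‖Tx − Ty‖ ≤ r‖x − y‖`. -/
def GammaFamily (X : Type*) [NormedAddCommGroup X] [NormedSpace ℝ X]
    (r s : ℝ) : Set (X → X) :=
  {T | ∀ x y : X, s * ‖x - T x‖ ≤ ‖x - y‖ → ‖T x - T y‖ ≤ r * ‖x - y‖}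

lemma sqrt5_sq : (Real.sqrt 5) ^ 2 = 5 := Real.sq_sqrt (by norm_num)
lemma sqrt2_sq : (Real.sqrt 2) ^ 2 = 2 := Real.sq_sqrt (by norm_num)
lemma sqrt5_gt : 2 < Real.sqrt 5 := by nlinarith [sqrt5_sq, Real.sqrt_nonneg 5]
lemma sqrt2_pos : 0 < Real.sqrt 2 := Real.sqrt_pos.2 (by norm_num)
lemma golden_half : 1/2 < (Real.sqrt 5 - 1) / 2 := by linarith [sqrt5_gt]

lemma golden_lt : (Real.sqrt 5 - 1) / 2 < 1 / Real.sqrt 2 := by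
  rw [lt_div_iff₀ sqrt2_pos]
  nlinarith [sqrt5_sq, sqrt2_sq, sqrt5_gt, sqrt2_pos.le, Real.sqrt_nonneg 5,
    sq_nonneg ((Real.sqrt 5 - 1) / 2 * Real.sqrt 2 - 1)]

lemma suzukiF_pos {r : ℝ} (h1 : r < 1) : 0 < suzukiF r := by
  unfold suzukiF
  split_ifs with ha hb
  · norm_num
  · exact div_pos (by linarith) (by nlinarith [golden_half, not_le.1 ha])
  · have := lt_trans golden_half (not_le.1 ha)
    exact div_pos one_pos (by linarith)

lemma suzukiF_le_one {r : ℝ} : suzukiF r ≤ 1 := by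
  unfold suzukiF
  split_ifs with ha hb
  · exact le_rfl
  · have hg : 1/2 < r := lt_trans golden_half (not_le.1 ha)
    rw [div_le_one (by positivity)]
    nlinarith [sqrt5_sq, Real.sqrt_nonneg 5,
      mul_pos (sub_pos.2 (not_le.1 ha)) (show (0:ℝ) < r + (Real.sqrt 5 + 1)/2 by
        nlinarith [Real.sqrt_nonneg 5])]
  · have hg : 1/2 < r := lt_trans golden_half (not_le.1 ha)
    rw [div_le_one (by linarith)]
    linarith

lemma suzukiF_caseA {r : ℝ} (h0 : 0 ≤ r) (h : r < 1 / Real.sqrt 2) :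
    suzukiF r * r ^ 2 ≤ 1 - r := by
  unfold suzukiF
  split_ifs with ha _
  · nlinarith [sqrt5_sq, Real.sqrt_nonneg 5,
      mul_nonneg (sub_nonneg.2 ha) (show (0:ℝ) ≤ r + (Real.sqrt 5 + 1)/2 by
        nlinarith [Real.sqrt_nonneg 5])]
  · have hr : r ≠ 0 := by nlinarith [golden_half, not_le.1 ha]
    rw [div_mul_cancel₀ _ (pow_ne_zero 2 hr)]

lemma suzukiF_caseB {r : ℝ} (h : 1 / Real.sqrt 2 ≤ r) :
    suzukiF r * (1 + r) ≤ 1 := by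
  have hg := lt_of_lt_of_le golden_lt h
  have h0 : 1/2 < r := lt_trans golden_half hg
  unfold suzukiF
  rw [if_neg (not_le.2 hg), if_neg (not_lt.2 h)]
  exact le_of_eq (one_div_mul_cancel (by linarith : (1:ℝ) + r ≠ 0))

open Filter Function

lemma suzuki_fp {X : Type*} [NormedAddCommGroup X] [NormedSpace ℝ X] [CompleteSpace X]
    {r s : ℝ} (hr0 : 0 ≤ r) (hr1 : r < 1) (hs0 : 0 < s) (hs1 : s ≤ 1)
    (hcase : (2 * r ^ 2 < 1 ∧ s * r ^ 2 ≤ 1 - r) ∨ s * (1 + r) ≤ 1)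
    (T : X → X)
    (hT : ∀ x y : X, s * dist x (T x) ≤ dist x y → dist (T x) (T y) ≤ r * dist x y) :
    ∃ p : X, T p = p := by
  have hb : ∀ x : X, dist (T x) (T (T x)) ≤ r * dist x (T x) := fun x =>
    hT x (T x) (by nlinarith [dist_nonneg (x := x) (y := T x)])
  set u : ℕ → X := fun n => T^[n] 0 with hudef
  have hTu : ∀ n, T (u n) = u (n + 1) := fun n => (Function.iterate_succ_apply' T n 0).symm
  have hd : ∀ n, dist (u n) (u (n + 1)) ≤ dist (u 0) (u 1) * r ^ n := by
    intro n
    induction n with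
    | zero => simp
    | succ n ih =>
      have h1 := hb (u n)
      rw [hTu n, hTu (n+1)] at h1
      calc dist (u (n+1)) (u (n+2)) ≤ r * dist (u n) (u (n+1)) := h1
        _ ≤ r * (dist (u 0) (u 1) * r ^ n) := mul_le_mul_of_nonneg_left ih hr0
        _ = dist (u 0) (u 1) * r ^ (n+1) := by ring
  have hcauchy : CauchySeq u := cauchySeq_of_le_geometric r (dist (u 0) (u 1)) hr1 hd
  obtain ⟨z, hz⟩ := cauchySeq_tendsto_of_complete hcauchy
  have huz1 : Tendsto (fun n => u (n + 1)) atTop (nhds z) :=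
    hz.comp (tendsto_add_atTop_nat 1)
  have hdz : Tendsto (fun n => dist (u n) (u (n + 1))) atTop (nhds 0) := by
    have := hz.dist huz1
    simpa using this
  have hunz : Tendsto (fun n => dist (u n) z) atTop (nhds 0) := by
    have := hz.dist (tendsto_const_nhds (x := z))
    simpa using this
  have h2 : ∀ x : X, x ≠ z → dist z (T x) ≤ r * dist z x := by
    intro x hx
    have ha : 0 < dist z x := dist_pos.2 (Ne.symm hx)
    have hev1 : ∀ᶠ n in atTop, dist (u n) z < dist z x / 3 :=
      hunz.eventually_lt_const (by linarith)
    have hev2 : ∀ᶠ n in atTop, dist (u n) (u (n+1)) < dist z x / 3 :=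
      hdz.eventually_lt_const (by linarith)
    have hev : ∀ᶠ n in atTop, dist (u (n+1)) (T x) ≤ r * dist (u n) x := by
      filter_upwards [hev1, hev2] with n h1' h2'
      have htr : s * dist (u n) (T (u n)) ≤ dist (u n) x := by
        rw [hTu n]
        have t1 : dist z x ≤ dist z (u n) + dist (u n) x := dist_triangle _ _ _
        have t2 : dist z (u n) = dist (u n) z := dist_comm _ _
        nlinarith [mul_nonneg (sub_nonneg.2 hs1) (dist_nonneg (x := u n) (y := u (n+1)))]
      have := hT (u n) x htr
      rwa [hTu n] at this
    have l1 : Tendsto (fun n => dist (u (n+1)) (T x)) atTop (nhds (dist z (T x))) :=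
      huz1.dist tendsto_const_nhds
    have l2 : Tendsto (fun n => r * dist (u n) x) atTop (nhds (r * dist z x)) :=
      ((hz.dist tendsto_const_nhds).const_mul r)
    exact le_of_tendsto_of_tendsto l1 l2 hev
  rcases hcase with ⟨h2r, hsr⟩ | hsB
  · -- case A : r < 1/√2
    refine ⟨z, ?_⟩
    by_contra hTz
    have hzTz : z ≠ T z := fun h => hTz h.symm
    have ha : 0 < dist z (T z) := dist_pos.2 hzTz
    have hb1 : dist (T z) (T (T z)) ≤ r * dist z (T z) := hb z
    have hA2 : dist z (T (T z)) ≤ r * dist z (T z) := h2 (T z) (fun h => hTz h)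
    have hT2z : T (T z) ≠ z := by
      intro h
      have e : dist (T z) (T (T z)) = dist z (T z) := by rw [h, dist_comm]
      nlinarith
    have h3 : dist z (T (T (T z))) ≤ r * (r * dist z (T z)) := by
      have := h2 (T (T z)) hT2z
      nlinarith
    have h4 : dist (T (T z)) (T (T (T z))) ≤ r * (r * dist z (T z)) := by
      have := hb (T z)
      nlinarith
    have h5 : s * dist (T (T z)) (T (T (T z))) ≤ dist (T (T z)) z := by
      by_contra hcc
      push_neg at hcc
      have hlt : dist (T (T z)) z < (1 - r) * dist z (T z) := by
        nlinarith [mul_le_mul_of_nonneg_left h4 hs0.le,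
          mul_le_mul_of_nonneg_right hsr ha.le]
      have tri : dist z (T z) ≤ dist z (T (T z)) + dist (T (T z)) (T z) := dist_triangle _ _ _
      have e1 : dist z (T (T z)) = dist (T (T z)) z := dist_comm _ _
      have e2 : dist (T (T z)) (T z) = dist (T z) (T (T z)) := dist_comm _ _
      linarith
    have h6 : dist (T (T (T z))) (T z) ≤ r * (r * dist z (T z)) := by
      have h7 := hT (T (T z)) z h5
      have e : dist (T (T z)) z = dist z (T (T z)) := dist_comm _ _
      nlinarith [mul_le_mul_of_nonneg_left hA2 hr0]
    have tri2 : dist z (T z) ≤ dist z (T (T (T z))) + dist (T (T (T z))) (T z) :=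
      dist_triangle _ _ _
    nlinarith [mul_pos (show (0:ℝ) < 1 - 2 * r ^ 2 by linarith) ha]
  · -- case B : r ≥ 1/√2
    refine ⟨z, ?_⟩
    have key : ∀ ε : ℝ, 0 < ε → dist z (T z) ≤ (1 + r) * ε := by
      intro ε hε
      obtain ⟨N, hN⟩ := Metric.tendsto_atTop.1 hz ε hε
      have htrig : ∃ m, N ≤ m ∧ s * dist (u m) (u (m + 1)) ≤ dist (u m) z := by
        by_contra hcon
        push_neg at hcon
        have c1 := hcon N le_rfl
        have c2 := hcon (N + 1) (Nat.le_succ N)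
        have hdd : dist (u (N + 1)) (u (N + 2)) ≤ r * dist (u N) (u (N + 1)) := by
          have h1 := hb (u N); rw [hTu N, hTu (N+1)] at h1; exact h1
        have tri : dist (u N) (u (N+1)) ≤ dist (u N) z + dist z (u (N+1)) := dist_triangle _ _ _
        have e1 : dist z (u (N+1)) = dist (u (N+1)) z := dist_comm _ _
        nlinarith [mul_le_mul_of_nonneg_left hdd hs0.le,
          mul_nonneg (show (0:ℝ) ≤ 1 - s * (1 + r) by linarith)
            (dist_nonneg (x := u N) (y := u (N+1)))]
      obtain ⟨m, hm, htr⟩ := htrig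
      have h7 : dist (u (m + 1)) (T z) ≤ r * dist (u m) z := by
        have := hT (u m) z (by rw [hTu m]; exact htr)
        rwa [hTu m] at this
      have tri : dist z (T z) ≤ dist z (u (m+1)) + dist (u (m+1)) (T z) := dist_triangle _ _ _
      have b1 : dist (u (m+1)) z < ε := hN (m+1) (le_trans hm (Nat.le_succ m))
      have b2 : dist (u m) z < ε := hN m hm
      have e1 : dist z (u (m+1)) = dist (u (m+1)) z := dist_comm _ _
      nlinarith [mul_le_mul_of_nonneg_left b2.le hr0]
    have hle : dist z (T z) ≤ 0 := by
      by_contra hdd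
      push_neg at hdd
      have h1r : (0:ℝ) < 1 + r := by linarith
      have := key (dist z (T z) / (2 * (1 + r))) (by positivity)
      have e : (1 + r) * (dist z (T z) / (2 * (1 + r))) = dist z (T z) / 2 := by
        field_simp
      rw [e] at this
      linarith
    have : z = T z := by rwa [dist_le_zero] at hle
    exact this.symm

theorem stmt_5 {X : Type*} [NormedAddCommGroup X] [NormedSpace ℝ X] :
    List.TFAE
      [CompleteSpace X,
       ∀ r ∈ Set.Ico (0 : ℝ) 1, ∀ T ∈ GammaFamily X r (suzukiF r), ∃ p : X, T p = p,
       ∃ r ∈ Set.Ioo (0 : ℝ) 1, ∃ s ∈ Set.Ioc (0 : ℝ) (suzukiF r),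
         ∀ T ∈ GammaFamily X r s, ∃ p : X, T p = p] := by
  tfae_have 1 → 2 := by
    intro hc r hr T hTmem
    simp only [GammaFamily, Set.mem_setOf_eq] at hTmem
    simp only [← dist_eq_norm] at hTmem
    have hcase : (2 * r ^ 2 < 1 ∧ suzukiF r * r ^ 2 ≤ 1 - r) ∨ suzukiF r * (1 + r) ≤ 1 := by
      rcases lt_or_ge r (1 / Real.sqrt 2) with h | h
      · refine Or.inl ⟨?_, suzukiF_caseA hr.1 h⟩
        have hh : r * Real.sqrt 2 < 1 := (lt_div_iff₀ sqrt2_pos).1 h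
        nlinarith [sqrt2_sq, mul_nonneg hr.1 sqrt2_pos.le,
          mul_pos (sub_pos.2 hh) (show (0:ℝ) < 1 + r * Real.sqrt 2 by
            nlinarith [mul_nonneg hr.1 sqrt2_pos.le])]
      · exact Or.inr (suzukiF_caseB h)
    exact suzuki_fp hr.1 hr.2 (suzukiF_pos hr.2) suzukiF_le_one hcase T hTmem
  tfae_have 2 → 3 := by
    intro h2
    have hsF : suzukiF (1/2 : ℝ) = 1 := by
      unfold suzukiF
      rw [if_pos (by linarith [sqrt5_gt])]
    refine ⟨1/2, ⟨by norm_num, by norm_num⟩, 1, ⟨by norm_num, by rw [hsF]⟩, ?_⟩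
    intro T hT
    exact h2 (1/2) ⟨by norm_num, by norm_num⟩ T (by rw [hsF]; exact hT)
  tfae_have 3 → 1 := by
    rintro ⟨r, ⟨hr0, hr1⟩, s, ⟨hs0, hsf⟩, hfp⟩
    by_contra hnc
    obtain ⟨u, hu, hnl⟩ : ∃ u : ℕ → X, CauchySeq u ∧ ¬∃ x, Tendsto u atTop (nhds x) := by
      by_contra hcon
      push_neg at hcon
      exact hnc (Metric.complete_of_cauchySeq_tendsto fun v hv => hcon v hv)
    -- the "distance to the missing limit"
    have hL : ∀ x : X, ∃ L : ℝ, Tendsto (fun n => dist x (u n)) atTop (nhds L) := by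
      intro x
      apply cauchySeq_tendsto_of_complete
      rw [Metric.cauchySeq_iff]
      intro ε hε
      obtain ⟨N, hN⟩ := Metric.cauchySeq_iff.1 hu ε hε
      refine ⟨N, fun m hm n hn => ?_⟩
      rw [Real.dist_eq]
      calc |dist x (u m) - dist x (u n)| = |dist (u m) x - dist (u n) x| := by
            rw [dist_comm x (u m), dist_comm x (u n)]
        _ ≤ dist (u m) (u n) := abs_dist_sub_le _ _ _
        _ < ε := hN m hm n hn
    choose g hg using hL
    have hgnn : ∀ x, 0 ≤ g x := fun x => ge_of_tendsto' (hg x) (fun n => dist_nonneg)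
    have hgpos : ∀ x, 0 < g x := by
      intro x
      rcases (hgnn x).lt_or_eq with h | h
      · exact h
      · exfalso
        apply hnl
        refine ⟨x, tendsto_iff_dist_tendsto_zero.2 ?_⟩
        have : Tendsto (fun n => dist x (u n)) atTop (nhds 0) := h ▸ hg x
        simpa [dist_comm] using this
    have hg_tri1 : ∀ x y : X, g x ≤ dist x y + g y := by
      intro x y
      refine le_of_tendsto_of_tendsto' (hg x) (((hg y).const_add (dist x y))) (fun n => ?_)
      exact dist_triangle x y (u n)
    have hg_tri2 : ∀ x y : X, dist x y ≤ g x + g y := by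
      intro x y
      refine ge_of_tendsto' ((hg x).add (hg y)) (fun n => ?_)
      calc dist x y ≤ dist x (u n) + dist (u n) y := dist_triangle _ _ _
        _ = dist x (u n) + dist y (u n) := by rw [dist_comm (u n) y]
    have hg_small : ∀ ε : ℝ, 0 < ε → ∃ x : X, g x ≤ ε := by
      intro ε hε
      obtain ⟨N, hN⟩ := Metric.cauchySeq_iff.1 hu ε hε
      refine ⟨u N, le_of_tendsto (hg (u N)) ?_⟩
      exact eventually_atTop.2 ⟨N, fun n hn => (hN N le_rfl n hn).le⟩
    set c : ℝ := min (1/2) (r * s / (4 + s)) with hcdef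
    have hc0 : 0 < c := lt_min (by norm_num) (by positivity)
    have hc12 : c ≤ 1/2 := min_le_left _ _
    have hcrs : c * (4 + s) ≤ r * s := by
      have h1 : c ≤ r * s / (4 + s) := min_le_right _ _
      rw [le_div_iff₀ (by linarith)] at h1
      exact h1
    have hw : ∀ n : ℕ, ∃ x : X, g x ≤ (1/2 : ℝ) ^ n := fun n => hg_small _ (by positivity)
    choose w hwg using hw
    have hsel : ∀ x : X, ∃ n, g (w n) ≤ c * g x := by
      intro x
      obtain ⟨n, hn⟩ := exists_pow_lt_of_lt_one (mul_pos hc0 (hgpos x))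
        (by norm_num : (1/2 : ℝ) < 1)
      exact ⟨n, (hwg n).trans hn.le⟩
    set T : X → X := fun x => w (hsel x).choose with hTdef
    have hTg : ∀ x, g (T x) ≤ c * g x := fun x => (hsel x).choose_spec
    have hnofix : ∀ x, T x ≠ x := by
      intro x h
      have h1 := hTg x
      rw [h] at h1
      nlinarith [hgpos x]
    have hmem : T ∈ GammaFamily X r s := by
      intro x y htrig
      simp only [← dist_eq_norm] at htrig ⊢
      have hgx := hgpos x
      have hgy := hgpos y
      have hD : (0:ℝ) ≤ dist x y := dist_nonneg
      have h1 : (1 - c) * g x ≤ dist x (T x) := by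
        have := hg_tri1 x (T x)
        nlinarith [hTg x]
      have e1 : s * g x ≤ 2 * dist x y := by
        nlinarith [mul_le_mul_of_nonneg_left h1 hs0.le]
      have h2' : dist (T x) (T y) ≤ c * g x + c * g y := by
        have := hg_tri2 (T x) (T y)
        nlinarith [hTg x, hTg y]
      have h3 : g y ≤ dist x y + g x := by
        have := hg_tri1 y x
        rwa [dist_comm y x] at this
      have e3 : s * (c * g x + c * g y) ≤ s * (r * dist x y) := by
        nlinarith [mul_le_mul_of_nonneg_left e1 hc0.le,
          mul_le_mul_of_nonneg_right hcrs hD,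
          mul_le_mul_of_nonneg_left h3 (mul_pos hs0 hc0).le]
      have := le_of_mul_le_mul_left e3 hs0
      linarith [h2']
    obtain ⟨p, hp⟩ := hfp T hmem
    exact hnofix p hp
  tfae_finish
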